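/- arXiv:1711.05112 — 3 statements merged into one kernel-verified Lean document; each statement's English description precedes it below -/
import Mathlib

section
/- Fix integers Q > 2 and n ≥ 1. For a tuple i = (i_1,…,i_Q) with 1 ≤ i_1 ≤ … ≤ i_Q ≤ n that is not constant, define G(i) := max{i_{j+1} − i_j : i_{j+1} − i_j > 0, 1 ≤ j ≤ Q−1} and m(i) := min{j ∈ {1,…,Q−1} : i_{j+1} − i_j = G(i)}. Then for every m ∈ {1,…,Q−1}, every g ∈ {1,…,n} and every l ∈ {1,…,n}, the number of such tuples i with m(i) = m, G(i) = g and i_m = l is at most g^{m−1} · (g+1)^{Q−m−1}. -/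
set_option maxHeartbeats 1000000


/-- Counting lemma from the proof of the moment inequality: the number of
nondecreasing, nonconstant tuples `(i_1,…,i_Q) ∈ {1,…,n}^Q` whose largest gap
is `G(i) = g`, first attained at position `m(i) = m`, and with `i_m = l`, is at
most `g^{m-1} (g+1)^{Q-m-1}`.  Tuples are encoded as monotone maps
`f : Fin Q → Fin n` via `i_r = f (r-1) + 1`; the gap `i_{j+1} - i_j` is
`f j - f (j-1)` (0-based). -/
theorem stmt_4
    (Q n : ℕ) (hQ : 2 < Q) (hn : 1 ≤ n)
    (m g l : ℕ) (hm1 : 1 ≤ m) (hm2 : m ≤ Q - 1)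
    (hg1 : 1 ≤ g) (hg2 : g ≤ n) (hl1 : 1 ≤ l) (hl2 : l ≤ n) :
    (Finset.univ.filter (fun f : Fin Q → Fin n =>
        -- nondecreasing
        (∀ p q : Fin Q, p ≤ q → f p ≤ f q) ∧
        -- not constant
        (∃ p q : Fin Q, f p ≠ f q) ∧
        -- G(i) = g : every gap is ≤ g …
        (∀ j : Fin Q, 1 ≤ j.val →
          (f j : ℕ) - (f ⟨j.val - 1, lt_of_le_of_lt (Nat.sub_le _ _) j.isLt⟩ : ℕ) ≤ g) ∧
        -- … and the gap at position m equals g (hence the maximum is g)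
        ((f ⟨m, by omega⟩ : ℕ) - (f ⟨m - 1, by omega⟩ : ℕ) = g) ∧
        -- m(i) = m : gaps before position m are < g
        (∀ j : Fin Q, 1 ≤ j.val → j.val < m →
          (f j : ℕ) - (f ⟨j.val - 1, lt_of_le_of_lt (Nat.sub_le _ _) j.isLt⟩ : ℕ) < g) ∧
        -- i_m = l
        ((f ⟨m - 1, by omega⟩ : ℕ) + 1 = l))).card
      ≤ g ^ (m - 1) * (g + 1) ^ (Q - m - 1) := by
  classical
  set F : (Fin Q → Fin n) → (Fin (m-1) → Fin g) × (Fin (Q-m-1) → Fin (g+1)) :=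
    fun f => (fun a => ⟨((f ⟨a.val+1, by omega⟩ : ℕ) - (f ⟨a.val, by omega⟩ : ℕ)) % g,
                Nat.mod_lt _ (by omega)⟩,
              fun b => ⟨((f ⟨m+1+b.val, by omega⟩ : ℕ) - (f ⟨m+b.val, by omega⟩ : ℕ)) % (g+1),
                Nat.mod_lt _ (by omega)⟩) with hF
  refine le_trans (Finset.card_le_card_of_injOn F (fun _ _ => Finset.mem_univ _) ?_)
    (le_of_eq ?_)
  swap
  · rw [Finset.card_univ, Fintype.card_prod, Fintype.card_fun, Fintype.card_fun,
      Fintype.card_fin, Fintype.card_fin, Fintype.card_fin, Fintype.card_fin]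
  · intro f1 hf1 f2 hf2 heq
    simp only [Finset.coe_filter, Set.mem_setOf_eq, Finset.mem_univ, true_and] at hf1 hf2
    obtain ⟨mono1, -, hle1, hgm1, hlt1, hval1⟩ := hf1
    obtain ⟨mono2, -, hle2, hgm2, hlt2, hval2⟩ := hf2
    -- gap equality at every position 1 ≤ j < Q
    have gapeq : ∀ j : ℕ, 1 ≤ j → ∀ hj : j < Q,
        (f1 ⟨j, hj⟩ : ℕ) - (f1 ⟨j-1, by omega⟩ : ℕ)
          = (f2 ⟨j, hj⟩ : ℕ) - (f2 ⟨j-1, by omega⟩ : ℕ) := by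
      intro j hj1 hj
      rcases lt_trichotomy j m with hjm | rfl | hjm
      · have ha : ((f1 ⟨j-1+1, by omega⟩ : ℕ) - (f1 ⟨j-1, by omega⟩ : ℕ)) % g
            = ((f2 ⟨j-1+1, by omega⟩ : ℕ) - (f2 ⟨j-1, by omega⟩ : ℕ)) % g :=
          congrArg Fin.val (congrFun (congrArg Prod.fst heq) ⟨j-1, by omega⟩)
        have e1 : (⟨j-1+1, by omega⟩ : Fin Q) = ⟨j, hj⟩ := by
          simp only [Fin.mk.injEq]; omega
        rw [e1] at ha
        have l1 := hlt1 ⟨j, hj⟩ hj1 hjm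
        have l2 := hlt2 ⟨j, hj⟩ hj1 hjm
        simp only at l1 l2
        rwa [Nat.mod_eq_of_lt l1, Nat.mod_eq_of_lt l2] at ha
      · omega
      · have hb : ((f1 ⟨m+1+(j-m-1), by omega⟩ : ℕ) - (f1 ⟨m+(j-m-1), by omega⟩ : ℕ)) % (g+1)
            = ((f2 ⟨m+1+(j-m-1), by omega⟩ : ℕ) - (f2 ⟨m+(j-m-1), by omega⟩ : ℕ)) % (g+1) :=
          congrArg Fin.val (congrFun (congrArg Prod.snd heq) ⟨j-m-1, by omega⟩)
        have e1 : (⟨m+1+(j-m-1), by omega⟩ : Fin Q) = ⟨j, hj⟩ := by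
          simp only [Fin.mk.injEq]; omega
        have e2 : (⟨m+(j-m-1), by omega⟩ : Fin Q) = (⟨j-1, by omega⟩ : Fin Q) := by
          simp only [Fin.mk.injEq]; omega
        rw [e1, e2] at hb
        have l1 := hle1 ⟨j, hj⟩ hj1
        have l2 := hle2 ⟨j, hj⟩ hj1
        simp only at l1 l2
        have r1 : ((f1 ⟨j, hj⟩ : ℕ) - (f1 ⟨j-1, by omega⟩ : ℕ)) % (g+1)
            = (f1 ⟨j, hj⟩ : ℕ) - (f1 ⟨j-1, by omega⟩ : ℕ) := Nat.mod_eq_of_lt (by omega)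
        have r2 : ((f2 ⟨j, hj⟩ : ℕ) - (f2 ⟨j-1, by omega⟩ : ℕ)) % (g+1)
            = (f2 ⟨j, hj⟩ : ℕ) - (f2 ⟨j-1, by omega⟩ : ℕ) := Nat.mod_eq_of_lt (by omega)
        exact (r1.symm.trans hb).trans r2
    have base : (f1 ⟨m-1, by omega⟩ : ℕ) = (f2 ⟨m-1, by omega⟩ : ℕ) := by omega
    -- downward induction
    have down : ∀ k : ℕ, k ≤ m-1 →
        (f1 ⟨m-1-k, by omega⟩ : ℕ) = (f2 ⟨m-1-k, by omega⟩ : ℕ) := by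
      intro k
      induction k with
      | zero => intro _; exact base
      | succ k ih =>
        intro hk
        have ihk := ih (by omega)
        have hj1 : 1 ≤ m-1-k := by omega
        have hjQ : m-1-k < Q := by omega
        have ge := gapeq (m-1-k) hj1 hjQ
        have mo1 := mono1 ⟨m-1-k-1, by omega⟩ ⟨m-1-k, hjQ⟩ (by simp [Fin.le_def])
        have mo2 := mono2 ⟨m-1-k-1, by omega⟩ ⟨m-1-k, hjQ⟩ (by simp [Fin.le_def])
        rw [Fin.le_def] at mo1 mo2
        have e : (⟨m-1-(k+1), by omega⟩ : Fin Q) = (⟨m-1-k-1, by omega⟩ : Fin Q) := by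
          simp only [Fin.mk.injEq]; omega
        rw [e]
        omega
    -- upward induction
    have up : ∀ k : ℕ, ∀ h : m-1+k < Q,
        (f1 ⟨m-1+k, h⟩ : ℕ) = (f2 ⟨m-1+k, h⟩ : ℕ) := by
      intro k
      induction k with
      | zero => intro _; exact base
      | succ k ih =>
        intro h
        have ihk := ih (by omega)
        have hj1 : 1 ≤ m-1+(k+1) := by omega
        have ge := gapeq (m-1+(k+1)) hj1 h
        have mo1 := mono1 ⟨m-1+(k+1)-1, by omega⟩ ⟨m-1+(k+1), h⟩ (by simp [Fin.le_def])
        have mo2 := mono2 ⟨m-1+(k+1)-1, by omega⟩ ⟨m-1+(k+1), h⟩ (by simp [Fin.le_def])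
        rw [Fin.le_def] at mo1 mo2
        have e : (⟨m-1+(k+1)-1, by omega⟩ : Fin Q) = (⟨m-1+k, by omega⟩ : Fin Q) := by
          simp only [Fin.mk.injEq]; omega
        rw [e] at ge mo1 mo2
        omega
    funext p
    apply Fin.ext
    rcases le_or_gt p.val (m-1) with hp | hp
    · have hd := down (m-1-p.val) (by omega)
      have e : (⟨m-1-(m-1-p.val), by omega⟩ : Fin Q) = p := by
        apply Fin.ext; show m-1-(m-1-p.val) = p.val; omega
      rwa [e] at hd
    · have hu := up (p.val-(m-1)) (by omega)
      have e : (⟨m-1+(p.val-(m-1)), by omega⟩ : Fin Q) = p := by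
        apply Fin.ext; show m-1+(p.val-(m-1)) = p.val; omega
      rwa [e] at hu
end

section
/- Let P be the distribution of a random vector (Y, X) on ℝ × ℝ^d with E[Y²] < ∞. Consider the function class ℱ := {(y,x) ↦ y · 1{x ≤ z} : z ∈ ℝ^d}, where x ≤ z means componentwise inequality. Then there exists a constant C < ∞ such that for every ε ∈ (0,1] there exist N ≤ C ε^{−2d} functions a_1,…,a_N : ℝ × ℝ^d → ℝ and nonnegative measurable functions b_1,…,b_N with E[b_j(Y,X)²]^{1/2} < ε for all j, such that for every φ ∈ ℱ there is an index j with |φ − a_j| ≤ b_j pointwise. In other words, N_[](ε, ℱ, L²(P)) = O(ε^{−2d}) as ε → 0. -/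
open MeasureTheory Set ENNReal

lemma grid_sup {ν : Measure ℝ} (c : ℝ≥0∞) (s : ℕ → Set ℝ) (hmono : Monotone s)
    (h : ∀ n, ν (s n) ≤ c) : ν (⋃ n, s n) ≤ c := by
  rw [hmono.measure_iUnion]
  exact iSup_le h

lemma grid_cancel {ν : Measure ℝ} [IsFiniteMeasure ν] {A B : Set ℝ} {x δ : ℝ}
    (hx : 0 ≤ x) (hδ : 0 ≤ δ) (hB : MeasurableSet B) (hd : Disjoint A B)
    (h1 : ENNReal.ofReal x ≤ ν A) (h2 : ν (A ∪ B) ≤ ENNReal.ofReal (x + δ)) :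
    ν B ≤ ENNReal.ofReal δ := by
  have hu : ν (A ∪ B) = ν A + ν B := measure_union hd hB
  have h3 : ENNReal.ofReal x + ν B ≤ ENNReal.ofReal x + ENNReal.ofReal δ := by
    calc ENNReal.ofReal x + ν B ≤ ν A + ν B := add_le_add h1 le_rfl
      _ = ν (A ∪ B) := hu.symm
      _ ≤ ENNReal.ofReal (x + δ) := h2
      _ = ENNReal.ofReal x + ENNReal.ofReal δ := ENNReal.ofReal_add hx hδ
  exact (ENNReal.add_le_add_iff_left ENNReal.ofReal_ne_top).mp h3

lemma grid_Iic_iInter (a : ℝ) : Set.Iic a = ⋂ n : ℕ, Set.Iic (a + 1 / (n + 1)) := by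
  ext x
  simp only [mem_Iic, mem_iInter]
  constructor
  · intro h n
    have h1 : (0:ℝ) < 1 / ((n:ℝ) + 1) := by positivity
    linarith
  · intro h
    by_contra hx
    push_neg at hx
    obtain ⟨n, hn⟩ := exists_nat_one_div_lt (show (0:ℝ) < x - a by linarith)
    have := h n
    linarith

lemma grid_Iio_iUnion (b : ℝ) : Set.Iio b = ⋃ n : ℕ, Set.Iic (b - 1 / (n + 1)) := by
  ext x
  simp only [mem_Iio, mem_iUnion, mem_Iic]
  constructor
  · intro h
    obtain ⟨n, hn⟩ := exists_nat_one_div_lt (show (0:ℝ) < b - x by linarith)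
    exact ⟨n, by linarith⟩
  · rintro ⟨n, hn⟩
    have h1 : (0:ℝ) < 1 / ((n:ℝ) + 1) := by positivity
    linarith

lemma grid_Ioo_iUnion {a b : ℝ} (hab : a < b) :
    Set.Ioo a b = ⋃ n : ℕ, Set.Ioc a (b - 1 / (n + 1)) := by
  ext x
  simp only [mem_Ioo, mem_iUnion, mem_Ioc]
  constructor
  · rintro ⟨h1, h2⟩
    obtain ⟨n, hn⟩ := exists_nat_one_div_lt (show (0:ℝ) < b - x by linarith)
    exact ⟨n, h1, by linarith⟩
  · rintro ⟨n, h1, h2⟩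
    have h3 : (0:ℝ) < 1 / ((n:ℝ) + 1) := by positivity
    exact ⟨h1, by linarith⟩

lemma grid_Ioi_iUnion (a : ℝ) : Set.Ioi a = ⋃ n : ℕ, Set.Ioc a (a + (n + 1)) := by
  ext x
  simp only [mem_Ioi, mem_iUnion, mem_Ioc]
  constructor
  · intro h
    obtain ⟨n, hn⟩ := exists_nat_ge (x - a)
    exact ⟨n, h, by linarith⟩
  · rintro ⟨n, h1, _⟩
    exact h1

lemma grid_univ_iUnion : (Set.univ : Set ℝ) = ⋃ n : ℕ, Set.Iic (n : ℝ) := by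
  ext x
  simp only [mem_univ, mem_iUnion, mem_Iic, true_iff]
  obtain ⟨n, hn⟩ := exists_nat_ge x
  exact ⟨n, hn⟩

/-- Quantile grid for a finite measure on `ℝ`. -/
lemma grid (ν : Measure ℝ) [IsFiniteMeasure ν] (δ : ℝ) (hδ : 0 < δ) :
    ∃ m : ℕ, (m : ℝ) * δ ≤ (ν Set.univ).toReal ∧
      ∃ D L : Fin (m + 1) → Set ℝ,
        (∀ i, MeasurableSet (D i)) ∧
        (∀ i, ν (D i) ≤ ENNReal.ofReal δ) ∧
        (∀ z : ℝ, ∃ i, (∀ s ∈ L i, s ≤ z) ∧ ∀ s, s ∉ L i → s ≤ z → s ∈ D i) := by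
  classical
  set S : ℕ → Set ℝ := fun i => {t | ENNReal.ofReal (i * δ) ≤ ν (Set.Iic t)} with hS
  have hSup : ∀ i : ℕ, ∀ ⦃t t' : ℝ⦄, t ≤ t' → t ∈ S i → t' ∈ S i := fun i t t' htt ht =>
    le_trans ht (measure_mono (Set.Iic_subset_Iic.mpr htt))
  have hSanti : ∀ i j : ℕ, i ≤ j → S j ⊆ S i := by
    intro i j hij u hu
    refine le_trans (ENNReal.ofReal_le_ofReal ?_) hu
    have h1 : (i:ℝ) ≤ j := by exact_mod_cast hij
    nlinarith [hδ.le]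
  have hS0 : (S 0).Nonempty := ⟨0, by simp [hS]⟩
  have hKbdd : BddAbove {i : ℕ | (S i).Nonempty} := by
    refine ⟨Nat.ceil ((ν Set.univ).toReal / δ), ?_⟩
    rintro i ⟨u, hu⟩
    have h1 : ENNReal.ofReal (i * δ) ≤ ν Set.univ :=
      le_trans hu (measure_mono (Set.subset_univ _))
    have h2 : (i:ℝ) * δ ≤ (ν Set.univ).toReal := by
      have h3 := ENNReal.toReal_mono (measure_ne_top ν _) h1
      rwa [ENNReal.toReal_ofReal (by positivity)] at h3
    have h3 : (i:ℝ) ≤ (ν Set.univ).toReal / δ := (le_div_iff₀ hδ).mpr h2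
    exact_mod_cast le_trans h3 (Nat.le_ceil _)
  set m : ℕ := sSup {i : ℕ | (S i).Nonempty} with hm
  have hmK : (S m).Nonempty := Nat.sSup_mem ⟨0, hS0⟩ hKbdd
  have hKdc : ∀ i : ℕ, i ≤ m → (S i).Nonempty := fun i hi =>
    ⟨hmK.choose, hSanti i m hi hmK.choose_spec⟩
  have hm1 : ∀ u : ℝ, ν (Set.Iic u) < ENNReal.ofReal (((m:ℝ) + 1) * δ) := by
    intro u
    by_contra h
    push_neg at h
    have h1 : (m + 1 : ℕ) ∈ {i : ℕ | (S i).Nonempty} := ⟨u, by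
      show ENNReal.ofReal (((m + 1 : ℕ) : ℝ) * δ) ≤ ν (Set.Iic u); push_cast; exact h⟩
    have := le_csSup hKbdd h1
    omega
  have hmT : (m : ℝ) * δ ≤ (ν Set.univ).toReal := by
    obtain ⟨u, hu⟩ := hmK
    have h1 : ENNReal.ofReal (m * δ) ≤ ν Set.univ :=
      le_trans hu (measure_mono (Set.subset_univ _))
    have h3 := ENNReal.toReal_mono (measure_ne_top ν _) h1
    rwa [ENNReal.toReal_ofReal (by positivity)] at h3
  set t : ℕ → ℝ := fun i => sInf (S i) with htdef
  have hbdd : ∀ i : ℕ, 1 ≤ i → BddBelow (S i) := by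
    intro i hi
    by_contra h
    have hall : ∀ n : ℕ, ENNReal.ofReal (i * δ) ≤ ν (Set.Iic (-(n:ℝ))) := by
      intro n
      obtain ⟨x, hx, hlt⟩ := not_bddBelow_iff.mp h (-(n:ℝ))
      exact hSup i hlt.le hx
    have hanti : Antitone fun n : ℕ => Set.Iic (-(n:ℝ)) := by
      intro a b hab
      refine Set.Iic_subset_Iic.mpr ?_
      have : (a:ℝ) ≤ b := by exact_mod_cast hab
      linarith
    have hint : ν (⋂ n : ℕ, Set.Iic (-(n:ℝ))) = ⨅ n : ℕ, ν (Set.Iic (-(n:ℝ))) :=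
      hanti.measure_iInter (fun n => measurableSet_Iic.nullMeasurableSet)
        ⟨0, measure_ne_top _ _⟩
    have hempty : (⋂ n : ℕ, Set.Iic (-(n:ℝ))) = ∅ := by
      ext x
      simp only [Set.mem_iInter, Set.mem_Iic, Set.mem_empty_iff_false, iff_false]
      push_neg
      obtain ⟨n, hn⟩ := exists_nat_gt (-x)
      exact ⟨n, by linarith⟩
    have hle : ENNReal.ofReal (i * δ) ≤ 0 := by
      calc ENNReal.ofReal (i * δ) ≤ ⨅ n : ℕ, ν (Set.Iic (-(n:ℝ))) := le_iInf hall
        _ = ν (⋂ n : ℕ, Set.Iic (-(n:ℝ))) := hint.symm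
        _ = 0 := by rw [hempty, measure_empty]
    have hpos : 0 < (i:ℝ) * δ := by
      have : (1:ℝ) ≤ i := by exact_mod_cast hi
      nlinarith
    simp only [nonpos_iff_eq_zero, ENNReal.ofReal_eq_zero] at hle
    linarith
  have hA : ∀ i : ℕ, 1 ≤ i → i ≤ m → ENNReal.ofReal (i * δ) ≤ ν (Set.Iic (t i)) := by
    intro i h1 h2
    have hne := hKdc i h2
    rw [grid_Iic_iInter (t i)]
    have hanti : Antitone fun n : ℕ => Set.Iic (t i + 1 / (n + 1)) := by
      intro a b hab
      refine Set.Iic_subset_Iic.mpr ?_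
      have hab' : (a:ℝ) ≤ b := by exact_mod_cast hab
      have h3 : (1:ℝ) / ((b:ℝ) + 1) ≤ 1 / ((a:ℝ) + 1) := by
        apply one_div_le_one_div_of_le <;> linarith
      linarith
    rw [hanti.measure_iInter (fun n => measurableSet_Iic.nullMeasurableSet)
      ⟨0, measure_ne_top _ _⟩]
    refine le_iInf fun n => ?_
    have hlt : sInf (S i) < t i + 1 / ((n:ℝ) + 1) := by
      have : (0:ℝ) < 1 / ((n:ℝ) + 1) := by positivity
      rw [htdef] at *
      linarith
    obtain ⟨x, hx, hxlt⟩ := (csInf_lt_iff (hbdd i h1) hne).mp hlt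
    exact hSup i hxlt.le hx
  have hB : ∀ i : ℕ, 1 ≤ i → ∀ s : ℝ, s < t i → ν (Set.Iic s) < ENNReal.ofReal (i * δ) := by
    intro i h1 s hs
    by_contra h
    push_neg at h
    exact absurd (csInf_le (hbdd i h1) h) (not_le.mpr hs)
  refine ⟨m, hmT, fun i =>
      (if (i:ℕ) = 0 then Set.univ else Set.Ioi (t i)) ∩
      (if (i:ℕ) = m then Set.univ else Set.Iio (t ((i:ℕ) + 1))),
    fun i => if (i:ℕ) = 0 then ∅ else Set.Iic (t i), ?_, ?_, ?_⟩
  · intro i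
    refine MeasurableSet.inter ?_ ?_ <;> split_ifs <;>
      first
        | exact MeasurableSet.univ
        | exact measurableSet_Ioi
        | exact measurableSet_Iio
  · intro i
    beta_reduce
    by_cases h0 : (i:ℕ) = 0 <;> by_cases hm' : (i:ℕ) = m
    · -- i = 0 = m : whole line
      rw [if_pos h0, if_pos hm', Set.univ_inter, grid_univ_iUnion]
      refine grid_sup _ _ (fun a b hab => Set.Iic_subset_Iic.mpr (by exact_mod_cast hab)) ?_
      intro n
      have hm0 : m = 0 := by rw [← hm', h0]
      have h2 := (hm1 (n : ℝ)).le
      rw [hm0] at h2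
      simpa using h2
    · -- i = 0 < m : left tail
      rw [if_pos h0, if_neg hm', Set.univ_inter, h0, grid_Iio_iUnion (t (0 + 1))]
      refine grid_sup _ _ ?_ ?_
      · intro a b hab
        refine Set.Iic_subset_Iic.mpr ?_
        have hab' : (a:ℝ) ≤ b := by exact_mod_cast hab
        have h3 : (1:ℝ) / ((b:ℝ) + 1) ≤ 1 / ((a:ℝ) + 1) := by
          apply one_div_le_one_div_of_le <;> linarith
        linarith
      · intro n
        have h1m : 1 ≤ m := by
          rcases Nat.eq_zero_or_pos m with h | h
          · exact absurd (by omega : (i:ℕ) = m) hm'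
          · exact h
        have hlt : t (0+1) - 1 / ((n:ℝ) + 1) < t 1 := by
          have h4 : (0:ℝ) < 1 / ((n:ℝ) + 1) := by positivity
          have h5 : t (0+1) = t 1 := by norm_num
          rw [h5]
          linarith
        have h6 := (hB 1 le_rfl _ hlt).le
        simpa using h6
    · -- 0 < i = m : right tail
      rw [if_neg h0, if_pos hm', Set.inter_univ]
      set n := (i:ℕ) with hn
      have h1n : 1 ≤ n := Nat.one_le_iff_ne_zero.mpr h0
      rw [grid_Ioi_iUnion (t n)]
      refine grid_sup _ _ ?_ ?_
      · intro a b hab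
        apply Set.Ioc_subset_Ioc_right
        have : (a:ℝ) ≤ b := by exact_mod_cast hab
        linarith
      · intro k
        refine grid_cancel (x := (n:ℝ) * δ) (by positivity) hδ.le measurableSet_Ioc
          (Set.Iic_disjoint_Ioc le_rfl) (hA n h1n (by omega)) ?_
        rw [Set.Iic_union_Ioc_eq_Iic (by linarith [Nat.cast_nonneg (α := ℝ) k] :
          t n ≤ t n + ((k:ℝ) + 1))]
        have := hm1 (t n + ((k:ℝ) + 1))
        rw [hm'] at hn
        have heq : ((m:ℝ) + 1) * δ = (n:ℝ) * δ + δ := by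
          rw [hn]; ring
        rw [heq] at this
        exact this.le
    · -- 0 < i < m : middle interval
      rw [if_neg h0, if_neg hm']
      set n := (i:ℕ) with hn
      have h1n : 1 ≤ n := Nat.one_le_iff_ne_zero.mpr h0
      have hnm : n < m := lt_of_le_of_ne (by omega) hm'
      rw [Set.Ioi_inter_Iio]
      by_cases hab : t n < t (n + 1)
      · rw [grid_Ioo_iUnion hab]
        refine grid_sup _ _ ?_ ?_
        · intro a b h
          apply Set.Ioc_subset_Ioc_right
          have hab' : (a:ℝ) ≤ b := by exact_mod_cast h
          have h3 : (1:ℝ) / ((b:ℝ) + 1) ≤ 1 / ((a:ℝ) + 1) := by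
            apply one_div_le_one_div_of_le <;> linarith
          linarith
        · intro k
          by_cases hk : t (n + 1) - 1 / ((k:ℝ) + 1) < t n
          · rw [Set.Ioc_eq_empty (not_lt.mpr hk.le)]
            simp
          · push_neg at hk
            refine grid_cancel (x := (n:ℝ) * δ) (by positivity) hδ.le measurableSet_Ioc
              (Set.Iic_disjoint_Ioc le_rfl) (hA n h1n (by omega)) ?_
            rw [Set.Iic_union_Ioc_eq_Iic hk]
            have hlt : t (n + 1) - 1 / ((k:ℝ) + 1) < t (n + 1) := by
              have : (0:ℝ) < 1 / ((k:ℝ) + 1) := by positivity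
              linarith
            have := hB (n + 1) (by omega) _ hlt
            have heq : ((n:ℕ) + 1 : ℕ) * δ = ((n:ℝ) * δ + δ) := by push_cast; ring
            rw [heq] at this
            exact this.le
      · push_neg at hab
        rw [Set.Ioo_eq_empty (not_lt.mpr hab)]
        simp
  · intro z
    set KK := {n : ℕ | n ≤ m ∧ (n = 0 ∨ t n ≤ z)} with hKK
    have h0K : 0 ∈ KK := ⟨Nat.zero_le _, Or.inl rfl⟩
    have hKKb : BddAbove KK := ⟨m, fun n hn => hn.1⟩
    set n := sSup KK with hn
    have hnK : n ∈ KK := Nat.sSup_mem ⟨0, h0K⟩ hKKb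
    have hnm : n ≤ m := hnK.1
    refine ⟨⟨n, by omega⟩, ?_, ?_⟩
    · intro s hs
      by_cases h0 : n = 0
      · simp only [h0, if_pos rfl] at hs
        exact absurd hs (Set.notMem_empty s)
      · simp only [if_neg h0] at hs
        have htz := hnK.2.resolve_left h0
        exact le_trans hs htz
    · intro s hsL hsz
      beta_reduce
      refine Set.mem_inter ?_ ?_
      · by_cases h0 : n = 0
        · simp [h0]
        · simp only [if_neg h0]
          simp only [if_neg h0] at hsL
          exact Set.mem_Ioi.mpr (lt_of_not_ge fun h => hsL (Set.mem_Iic.mpr h))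
      · by_cases hm' : n = m
        · simp [hm']
        · simp only [if_neg hm']
          have hzn : z < t (n + 1) := by
            by_contra h
            push_neg at h
            have hmem : n + 1 ∈ KK := ⟨by omega, Or.inr h⟩
            have := le_csSup hKKb hmem
            omega
          exact Set.mem_Iio.mpr (lt_of_le_of_lt hsz hzn)

/-- Bracketing bound for the class `ℱ = {(y,x) ↦ y·1{x ≤ z} : z ∈ ℝ^d}`:
`N_[](ε, ℱ, L²(P)) = O(ε^{-2d})`. -/
theorem stmt_9
    (d : ℕ) (μ : Measure (ℝ × (Fin d → ℝ))) [IsProbabilityMeasure μ]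
    (hY2 : Integrable (fun p => p.1 ^ 2) μ) :
    ∃ C : ℝ, 0 < C ∧ ∀ ε : ℝ, 0 < ε → ε ≤ 1 →
      ∃ N : ℕ, (N : ℝ) ≤ C * ε ^ (-(2 * d : ℝ)) ∧
      ∃ a b : Fin N → (ℝ × (Fin d → ℝ) → ℝ),
        (∀ j : Fin N, Measurable (b j) ∧ (∀ p, 0 ≤ b j p) ∧
          Integrable (fun p => (b j p) ^ 2) μ ∧
          (∫ p, (b j p) ^ 2 ∂μ) ^ (1 / 2 : ℝ) < ε) ∧
        ∀ z : Fin d → ℝ, ∃ j : Fin N, ∀ p : ℝ × (Fin d → ℝ),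
          |p.1 * (if ∀ k, p.2 k ≤ z k then (1 : ℝ) else 0) - a j p| ≤ b j p := by
  classical
  set ρ := μ.withDensity (fun p => ENNReal.ofReal (p.1 ^ 2)) with hρ
  haveI hρfin : IsFiniteMeasure ρ := by
    constructor
    rw [hρ, withDensity_apply _ MeasurableSet.univ, Measure.restrict_univ]
    calc ∫⁻ p, ENNReal.ofReal (p.1 ^ 2) ∂μ ≤ ∫⁻ p, ‖p.1 ^ 2‖ₑ ∂μ :=
          lintegral_mono fun p => Real.ofReal_le_enorm _
      _ < ⊤ := hY2.hasFiniteIntegral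
  set T := (ρ Set.univ).toReal with hT
  have hT0 : 0 ≤ T := ENNReal.toReal_nonneg
  refine ⟨(2 * ((d:ℝ) + 1) * T + 1) ^ d, by positivity, ?_⟩
  intro ε hε hε1
  have hε2 : (0:ℝ) < ε ^ 2 := by positivity
  have hε21 : ε ^ 2 ≤ 1 := by nlinarith
  set δ := ε ^ 2 / (2 * ((d:ℝ) + 1)) with hδdef
  have hδ : 0 < δ := by positivity
  have hproj : ∀ k : Fin d, Measurable (fun p : ℝ × (Fin d → ℝ) => p.2 k) :=
    fun k => (measurable_pi_apply k).comp measurable_snd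
  have hgrid := fun k : Fin d => grid (ρ.map (fun p => p.2 k)) δ hδ
  choose m hmbd D L hDmeas hDν hcov using hgrid
  have hmap_univ : ∀ k, ((ρ.map (fun p : ℝ × (Fin d → ℝ) => p.2 k)) Set.univ).toReal = T := by
    intro k
    rw [Measure.map_apply (hproj k) MeasurableSet.univ]
    simp [hT]
  set N := ∏ k : Fin d, (m k + 1) with hN
  have hcard : Fintype.card (∀ k : Fin d, Fin (m k + 1)) = N := by
    simp [Fintype.card_pi, hN]
  set e : (∀ k : Fin d, Fin (m k + 1)) ≃ Fin N := Fintype.equivFinOfCardEq hcard with he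
  refine ⟨N, ?_, ?_⟩
  · -- cardinality bound
    have h1 : ∀ k, ((m k : ℝ) + 1) ≤ (2 * ((d:ℝ) + 1) * T + 1) / ε ^ 2 := by
      intro k
      have h2 := hmbd k
      rw [hmap_univ k] at h2
      have h3 : (m k : ℝ) * ε ^ 2 ≤ 2 * ((d:ℝ) + 1) * T := by
        rw [hδdef, mul_div_assoc'] at h2
        rw [div_le_iff₀ (by positivity)] at h2
        linarith
      rw [le_div_iff₀ hε2]
      nlinarith
    have hNval : (N:ℝ) = ∏ k : Fin d, ((m k : ℝ) + 1) := by
      rw [hN]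
      push_cast
      rfl
    calc (N:ℝ) = ∏ k : Fin d, ((m k : ℝ) + 1) := hNval
      _ ≤ ∏ _k : Fin d, ((2 * ((d:ℝ) + 1) * T + 1) / ε ^ 2) :=
          Finset.prod_le_prod (fun k _ => by positivity) (fun k _ => h1 k)
      _ = ((2 * ((d:ℝ) + 1) * T + 1) / ε ^ 2) ^ d := by
          rw [Finset.prod_const, Finset.card_univ, Fintype.card_fin]
      _ = (2 * ((d:ℝ) + 1) * T + 1) ^ d * ε ^ (-(2 * (d:ℝ))) := by
          rw [div_pow, Real.rpow_neg hε.le,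
            show (2 * (d:ℝ)) = ((2 * d : ℕ) : ℝ) by push_cast; ring,
            Real.rpow_natCast, ← pow_mul]
          ring
  · -- brackets
    set Eset : Fin N → Set (ℝ × (Fin d → ℝ)) := fun j =>
      ⋃ k : Fin d, (fun p : ℝ × (Fin d → ℝ) => p.2 k) ⁻¹' (D k (e.symm j k)) with hE
    have hEmeas : ∀ j, MeasurableSet (Eset j) := fun j =>
      MeasurableSet.iUnion fun k => (hproj k) (hDmeas k _)
    refine ⟨fun j p => p.1 * (if ∀ k, p.2 k ∈ L k (e.symm j k) then 1 else 0),
      fun j p => |p.1| * (if p ∈ Eset j then 1 else 0), ?_, ?_⟩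
    · intro j
      have hbmeas : Measurable (fun p : ℝ × (Fin d → ℝ) =>
          |p.1| * (if p ∈ Eset j then (1:ℝ) else 0)) :=
        measurable_fst.abs.mul (Measurable.ite (hEmeas j) measurable_const measurable_const)
      have hble : ∀ p : ℝ × (Fin d → ℝ),
          (|p.1| * (if p ∈ Eset j then (1:ℝ) else 0)) ^ 2 =
            (if p ∈ Eset j then p.1 ^ 2 else 0) := by
        intro p
        split_ifs <;> simp [mul_pow, sq_abs]
      have hbint : Integrable
          (fun p : ℝ × (Fin d → ℝ) => (|p.1| * (if p ∈ Eset j then (1:ℝ) else 0)) ^ 2) μ := by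
        refine hY2.mono' (hbmeas.pow_const 2).aestronglyMeasurable ?_
        refine Filter.Eventually.of_forall fun p => ?_
        rw [hble p, Real.norm_eq_abs]
        split_ifs
        · rw [abs_of_nonneg (sq_nonneg _)]
        · simp [sq_nonneg]
      refine ⟨hbmeas, fun p => mul_nonneg (abs_nonneg _) (by split_ifs <;> norm_num),
        hbint, ?_⟩
      have hint_le : ∫ p, (|p.1| * (if p ∈ Eset j then (1:ℝ) else 0)) ^ 2 ∂μ ≤ (d:ℝ) * δ := by
        have h1 : ENNReal.ofReal (∫ p, (|p.1| * (if p ∈ Eset j then (1:ℝ) else 0)) ^ 2 ∂μ) =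
            ∫⁻ p, ENNReal.ofReal ((|p.1| * (if p ∈ Eset j then (1:ℝ) else 0)) ^ 2) ∂μ :=
          ofReal_integral_eq_lintegral_ofReal hbint
            (Filter.Eventually.of_forall fun p => sq_nonneg _)
        have h2 : ∫⁻ p, ENNReal.ofReal ((|p.1| * (if p ∈ Eset j then (1:ℝ) else 0)) ^ 2) ∂μ =
            ρ (Eset j) := by
          rw [hρ, withDensity_apply _ (hEmeas j), ← lintegral_indicator (hEmeas j)]
          congr 1
          ext p
          rw [hble p]
          simp only [Set.indicator_apply]
          split_ifs <;> simp
        have h3 : ρ (Eset j) ≤ (d : ℕ) * ENNReal.ofReal δ := by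
          calc ρ (Eset j)
              ≤ ∑ k : Fin d, ρ ((fun p : ℝ × (Fin d → ℝ) => p.2 k) ⁻¹' (D k (e.symm j k))) :=
                measure_iUnion_fintype_le _ _
            _ = ∑ k : Fin d, (ρ.map (fun p : ℝ × (Fin d → ℝ) => p.2 k)) (D k (e.symm j k)) := by
                refine Finset.sum_congr rfl fun k _ => ?_
                rw [Measure.map_apply (hproj k) (hDmeas k _)]
            _ ≤ ∑ _k : Fin d, ENNReal.ofReal δ := Finset.sum_le_sum fun k _ => hDν k _
            _ = (d : ℕ) * ENNReal.ofReal δ := by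
                rw [Finset.sum_const, Finset.card_univ, Fintype.card_fin, nsmul_eq_mul]
        have h4 : ENNReal.ofReal (∫ p, (|p.1| * (if p ∈ Eset j then (1:ℝ) else 0)) ^ 2 ∂μ) ≤
            ENNReal.ofReal ((d:ℝ) * δ) := by
          rw [h1, h2]
          refine le_trans h3 ?_
          rw [ENNReal.ofReal_mul (by positivity), ENNReal.ofReal_natCast]
        exact (ENNReal.ofReal_le_ofReal_iff (by positivity)).mp h4
      have hlt : ∫ p, (|p.1| * (if p ∈ Eset j then (1:ℝ) else 0)) ^ 2 ∂μ < ε ^ 2 := by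
        refine lt_of_le_of_lt hint_le ?_
        rw [hδdef]
        rw [div_eq_mul_inv]
        have hd1 : (0:ℝ) < 2 * ((d:ℝ) + 1) := by positivity
        rw [show (d:ℝ) * (ε ^ 2 * (2 * ((d:ℝ) + 1))⁻¹) = ε ^ 2 * ((d:ℝ) / (2 * ((d:ℝ) + 1))) by
          field_simp]
        nlinarith [(div_lt_one hd1).mpr (by linarith : (d:ℝ) < 2 * ((d:ℝ) + 1))]
      have hnn : 0 ≤ ∫ p, (|p.1| * (if p ∈ Eset j then (1:ℝ) else 0)) ^ 2 ∂μ :=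
        integral_nonneg fun p => sq_nonneg _
      calc (∫ p, (|p.1| * (if p ∈ Eset j then (1:ℝ) else 0)) ^ 2 ∂μ) ^ (1/2 : ℝ)
          < (ε ^ 2) ^ (1/2 : ℝ) := Real.rpow_lt_rpow hnn hlt (by norm_num)
        _ = ε := by
            rw [← Real.rpow_natCast ε 2, ← Real.rpow_mul hε.le]
            norm_num
    · intro z
      choose i hi1 hi2 using fun k => hcov k (z k)
      refine ⟨e (fun k => i k), fun p => ?_⟩
      have hsymm : e.symm (e fun k => i k) = fun k => i k := Equiv.symm_apply_apply _ _
      simp only [hE, hsymm]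
      by_cases hL : ∀ k, p.2 k ∈ L k (i k)
      · have hz : ∀ k, p.2 k ≤ z k := fun k => hi1 k _ (hL k)
        rw [if_pos hL, if_pos hz, sub_self, abs_zero]
        exact mul_nonneg (abs_nonneg _) (by split_ifs <;> norm_num)
      · rw [if_neg hL, mul_zero, sub_zero]
        by_cases hz : ∀ k, p.2 k ≤ z k
        · rw [if_pos hz, mul_one]
          push_neg at hL
          obtain ⟨k, hk⟩ := hL
          have hD : p ∈ ⋃ k : Fin d, (fun p : ℝ × (Fin d → ℝ) => p.2 k) ⁻¹' (D k (i k)) :=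
            Set.mem_iUnion.mpr ⟨k, hi2 k _ hk (hz k)⟩
          rw [if_pos hD, mul_one]
        · rw [if_neg hz, mul_zero, abs_zero]
          exact mul_nonneg (abs_nonneg _) (by split_ifs <;> norm_num)
end

section
/- Let {X_t : t ∈ ℤ} be i.i.d. ℝ^d-valued random vectors with distribution function F_X, and let {ε_t : t ∈ ℤ} be a strictly stationary real-valued sequence, mutually independent of {X_t}, with E[ε_t | σ(ε_j : j ≤ t−1)] = 0 for all t and E[ε_1²] = 1. Let m, σ : ℝ^d → ℝ be measurable with ∫ m² dF_X < ∞ and ∫ σ² dF_X < ∞, and set Y_t := m(X_t) + σ(X_t) ε_t. Define α_n(1,z) := n^{−1/2} Σ_{i=1}^n (Y_i 1{X_i ≤ z} − E[Y_i 1{X_i ≤ z}]) for z ∈ ℝ^d (componentwise ≤). Then for every n ∈ ℕ and all z_1, z_2 ∈ ℝ^d, E[α_n(1,z_1) α_n(1,z_2)] = H_1(z_1 ∧ z_2) + H_2(z_1 ∧ z_2) − G_1(z_1) G_1(z_2), where z_1 ∧ z_2 is the componentwise minimum, H_1(z) := ∫_{(−∞,z]} m²(u) dF_X(u), H_2(z)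 := ∫_{(−∞,z]} σ²(u) dF_X(u) and G_1(z) := ∫_{(−∞,z]} m(u) dF_X(u). -/
open MeasureTheory

lemma aux_mul_int {Ω : Type*} [MeasurableSpace Ω] {P : Measure Ω} {f g : Ω → ℝ}
    (hf : MemLp f 2 P) (hg : MemLp g 2 P) : Integrable (fun ω => f ω * g ω) P := by
  exact hf.integrable_mul hg

/-- indicator of the south-west orthant -/
noncomputable def auxI {d : ℕ} (z u : Fin d → ℝ) : ℝ := if ∀ k, u k ≤ z k then 1 else 0

lemma auxI_apply {d : ℕ} (z u : Fin d → ℝ) :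
    (if ∀ k, u k ≤ z k then (1:ℝ) else 0) = auxI z u := rfl

/-- the σ-algebra generated by a family of functions -/
def auxJoint {Ω β : Type*} [MeasurableSpace β] (X : ℤ → Ω → β) : MeasurableSpace Ω :=
  ⨆ t : ℤ, MeasurableSpace.comap (X t) inferInstance

/-- the σ-algebra of the past before `t` -/
def auxPast {Ω β : Type*} [MeasurableSpace β] (ε : ℤ → Ω → β) (t : ℤ) : MeasurableSpace Ω :=
  ⨆ j : ℤ, ⨆ _ : j ≤ t - 1, MeasurableSpace.comap (ε j) inferInstance

/-- Covariance structure of the sequential empirical process (at s = 1) in the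
regression changepoint example:
`E[α_n(1,z₁) α_n(1,z₂)] = H₁(z₁∧z₂) + H₂(z₁∧z₂) − G₁(z₁) G₁(z₂)`. -/
theorem stmt_10
    {Ω : Type*} [MeasurableSpace Ω] (P : Measure Ω) [IsProbabilityMeasure P]
    (d : ℕ) (X : ℤ → Ω → (Fin d → ℝ)) (hXm : ∀ t, Measurable (X t))
    -- i.i.d. regressors
    (hXid : ∀ t : ℤ, Measure.map (X t) P = Measure.map (X 0) P)
    (hXindep : ProbabilityTheory.iIndepFun X P)
    (ε : ℤ → Ω → ℝ) (hεm : ∀ t, Measurable (ε t))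
    -- strict stationarity of the innovations
    (hstat : ∀ (m : ℕ) (t : Fin m → ℤ) (k : ℤ),
      Measure.map (fun ω (r : Fin m) => ε (t r + k) ω) P
        = Measure.map (fun ω (r : Fin m) => ε (t r) ω) P)
    -- mutual independence of the regressors and the innovations
    (hindep : ProbabilityTheory.Indep
      (⨆ t : ℤ, MeasurableSpace.comap (X t) inferInstance)
      (⨆ t : ℤ, MeasurableSpace.comap (ε t) inferInstance) P)
    -- martingale difference property
    (hmds : ∀ t : ℤ,
      P[ε t | ⨆ j : ℤ, ⨆ _ : j ≤ t - 1, MeasurableSpace.comap (ε j) inferInstance]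
        =ᵐ[P] fun _ => (0 : ℝ))
    (hL2 : ∀ t : ℤ, Integrable (fun ω => (ε t ω) ^ 2) P)
    (hε1 : ∫ ω, (ε 1 ω) ^ 2 ∂P = 1)
    (m σ : (Fin d → ℝ) → ℝ) (hm : Measurable m) (hσ : Measurable σ)
    (ν : Measure (Fin d → ℝ)) (hν : ν = Measure.map (X 0) P)
    (hm2 : Integrable (fun u => (m u) ^ 2) ν)
    (hσ2 : Integrable (fun u => (σ u) ^ 2) ν)
    (Y : ℤ → Ω → ℝ) (hY : ∀ t ω, Y t ω = m (X t ω) + σ (X t ω) * ε t ω)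
    (A : ℕ → (Fin d → ℝ) → Ω → ℝ)
    (hA : ∀ n z ω, A n z ω = (n : ℝ) ^ (-(1 / 2 : ℝ)) *
      ∑ i ∈ Finset.Icc 1 n,
        (Y i ω * (if ∀ k, X i ω k ≤ z k then (1 : ℝ) else 0)
          - ∫ ω', Y i ω' * (if ∀ k, X i ω' k ≤ z k then (1 : ℝ) else 0) ∂P)) :
    ∀ n : ℕ, 1 ≤ n → ∀ z₁ z₂ : Fin d → ℝ,
      ∫ ω, A n z₁ ω * A n z₂ ω ∂P =
        (∫ u in {u : Fin d → ℝ | ∀ k, u k ≤ min (z₁ k) (z₂ k)}, (m u) ^ 2 ∂ν)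
          + (∫ u in {u : Fin d → ℝ | ∀ k, u k ≤ min (z₁ k) (z₂ k)}, (σ u) ^ 2 ∂ν)
          - (∫ u in {u : Fin d → ℝ | ∀ k, u k ≤ z₁ k}, m u ∂ν)
            * (∫ u in {u : Fin d → ℝ | ∀ k, u k ≤ z₂ k}, m u ∂ν) := by
  intro n hn z₁ z₂
  -- basic objects
  have hS : ∀ z : Fin d → ℝ, MeasurableSet {u : Fin d → ℝ | ∀ k, u k ≤ z k} := by
    intro z
    rw [Set.setOf_forall]
    exact MeasurableSet.iInter fun k =>
      measurableSet_le (measurable_pi_apply k) measurable_const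
  have hIm : ∀ z : Fin d → ℝ, Measurable (auxI (d := d) z) := fun z =>
    Measurable.ite (hS z) measurable_const measurable_const
  have hIbd : ∀ z u : Fin d → ℝ, |auxI z u| ≤ 1 := by
    intro z u; unfold auxI; split_ifs <;> norm_num
  have hImin : ∀ u, auxI z₁ u * auxI z₂ u = auxI (fun k => min (z₁ k) (z₂ k)) u := by
    intro u
    unfold auxI
    by_cases h1 : ∀ k, u k ≤ z₁ k <;> by_cases h2 : ∀ k, u k ≤ z₂ k <;>
      simp [h1, h2, le_min_iff, forall_and]
  -- σ-algebra facts
  have hindep' : ProbabilityTheory.Indep (auxJoint X) (auxJoint ε) P := hindep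
  have hεMε : ∀ t, Measurable[auxJoint ε] (ε t) := fun t =>
    measurable_iff_comap_le.mpr (le_iSup (fun t => MeasurableSpace.comap (ε t) inferInstance) t)
  have hXMX : ∀ t, Measurable[auxJoint X] (X t) := fun t =>
    measurable_iff_comap_le.mpr (le_iSup (fun t => MeasurableSpace.comap (X t) inferInstance) t)
  -- independence of an MX-measurable func and an Mε-measurable func
  have hfact : ∀ (φ ψ : Ω → ℝ), Measurable[auxJoint X] φ → Measurable[auxJoint ε] ψ →
      Integrable φ P → Integrable ψ P →
      Integrable (fun ω => φ ω * ψ ω) P ∧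
        ∫ ω, φ ω * ψ ω ∂P = (∫ ω, φ ω ∂P) * ∫ ω, ψ ω ∂P := by
    intro φ ψ hφ hψ hφi hψi
    have hind : ProbabilityTheory.IndepFun φ ψ P := by
      have h1 := ProbabilityTheory.indep_of_indep_of_le_left hindep' hφ.comap_le
      exact ProbabilityTheory.indep_of_indep_of_le_right h1 hψ.comap_le
    exact ⟨hind.integrable_mul hφi hψi, hind.integral_mul_eq_mul_integral hφi.aestronglyMeasurable hψi.aestronglyMeasurable⟩
  -- moments of ε
  have hε2 : ∀ t, MemLp (ε t) 2 P := fun t =>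
    (memLp_two_iff_integrable_sq (hεm t).aestronglyMeasurable).mpr (hL2 t)
  have hεInt : ∀ t, Integrable (ε t) P := fun t => (hε2 t).integrable one_le_two
  have hPle : ∀ t : ℤ, auxPast ε t ≤ (inferInstance : MeasurableSpace Ω) := fun t =>
    iSup_le fun j => iSup_le fun _ => (hεm j).comap_le
  have hmds' : ∀ t : ℤ, P[ε t | auxPast ε t] =ᵐ[P] fun _ => (0 : ℝ) := hmds
  have hεmean : ∀ t, ∫ ω, ε t ω ∂P = 0 := by
    intro t
    rw [← integral_condExp (hPle t) (f := ε t), integral_congr_ae (hmds' t), integral_zero]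
  have hεsq : ∀ t, ∫ ω, (ε t ω) ^ 2 ∂P = 1 := by
    intro t
    have h := hstat 1 (fun _ => 1) (t - 1)
    have e1 : (fun ω (r : Fin 1) => ε ((fun _ : Fin 1 => (1:ℤ)) r + (t-1)) ω)
        = fun ω (_ : Fin 1) => ε t ω := by
      funext ω r; congr 1; ring
    have e2 : (fun ω (r : Fin 1) => ε ((fun _ : Fin 1 => (1:ℤ)) r) ω)
        = fun ω (_ : Fin 1) => ε 1 ω := rfl
    rw [e1, e2] at h
    have hq : Measurable (fun v : Fin 1 → ℝ => (v 0)^2) := (measurable_pi_apply 0).pow_const 2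
    have hmt : Measurable (fun ω (_ : Fin 1) => ε t ω) :=
      measurable_pi_lambda _ fun _ => hεm t
    have hm1 : Measurable (fun ω (_ : Fin 1) => ε 1 ω) :=
      measurable_pi_lambda _ fun _ => hεm 1
    have h2 := congrArg (fun μ => ∫ v : Fin 1 → ℝ, (v 0)^2 ∂μ) h
    simp only [integral_map hmt.aemeasurable hq.aestronglyMeasurable,
      integral_map hm1.aemeasurable hq.aestronglyMeasurable] at h2
    rw [h2]; exact hε1
  have hεcross : ∀ s t : ℤ, s ≠ t → ∫ ω, ε s ω * ε t ω ∂P = 0 := by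
    have key : ∀ s t : ℤ, s < t → ∫ ω, ε s ω * ε t ω ∂P = 0 := by
      intro s t hst
      have hsm : StronglyMeasurable[auxPast ε t] (ε s) := by
        have hms : Measurable[auxPast ε t] (ε s) := measurable_iff_comap_le.mpr
          (le_iSup₂ (f := fun (j : ℤ) (_ : j ≤ t - 1) =>
            MeasurableSpace.comap (ε j) inferInstance) s (by omega))
        exact hms.stronglyMeasurable
      have hprod : Integrable (ε s * ε t) P := aux_mul_int (hε2 s) (hε2 t)
      have h2 : P[ε s * ε t | auxPast ε t] =ᵐ[P] ε s * P[ε t | auxPast ε t] :=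
        condExp_mul_of_stronglyMeasurable_left hsm hprod (hεInt t)
      have h3 : ε s * P[ε t | auxPast ε t] =ᵐ[P] fun _ => (0:ℝ) := by
        filter_upwards [hmds' t] with ω hω
        simp [Pi.mul_apply, hω]
      calc ∫ ω, ε s ω * ε t ω ∂P = ∫ ω, (ε s * ε t) ω ∂P := rfl
        _ = ∫ ω, (P[ε s * ε t | auxPast ε t]) ω ∂P :=
            (integral_condExp (hPle t) (f := ε s * ε t)).symm
        _ = 0 := by rw [integral_congr_ae (h2.trans h3), integral_zero]
    intro s t hst
    rcases lt_or_gt_of_ne hst with h | h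
    · exact key s t h
    · rw [show (fun ω => ε s ω * ε t ω) = fun ω => ε t ω * ε s ω from by
        funext ω; ring]
      exact key t s h
  -- transfer between P and ν
  have hmap : ∀ i : ℤ, Measure.map (X i) P = ν := fun i => by rw [hXid i, hν]
  have hXint : ∀ (i : ℤ) (w : (Fin d → ℝ) → ℝ), Measurable w →
      ∫ ω, w (X i ω) ∂P = ∫ u, w u ∂ν := by
    intro i w hw
    rw [← hmap i, integral_map (hXm i).aemeasurable hw.aestronglyMeasurable]
  have hXint' : ∀ (i : ℤ) (w : (Fin d → ℝ) → ℝ), Measurable w → Integrable w ν →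
      Integrable (fun ω => w (X i ω)) P := by
    intro i w hw hwi
    exact (integrable_map_measure hw.aestronglyMeasurable (hXm i).aemeasurable).mp
      (by rwa [hmap i])
  have hXmem : ∀ (i : ℤ) (w : (Fin d → ℝ) → ℝ), Measurable w → MemLp w 2 ν →
      MemLp (fun ω => w (X i ω)) 2 P := by
    intro i w hw hwm
    exact (memLp_map_measure_iff hw.aestronglyMeasurable (hXm i).aemeasurable).mp
      (by rwa [hmap i])
  -- ν-side functions
  have hmem_m : MemLp m 2 ν := (memLp_two_iff_integrable_sq hm.aestronglyMeasurable).mpr hm2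
  have hmem_σ : MemLp σ 2 ν := (memLp_two_iff_integrable_sq hσ.aestronglyMeasurable).mpr hσ2
  have ha : ∀ z : Fin d → ℝ, Measurable (fun u => m u * auxI z u) := fun z => hm.mul (hIm z)
  have hb : ∀ z : Fin d → ℝ, Measurable (fun u => σ u * auxI z u) := fun z => hσ.mul (hIm z)
  have hbd : ∀ (w : (Fin d → ℝ) → ℝ) (z u : Fin d → ℝ), ‖w u * auxI z u‖ ≤ ‖w u‖ := by
    intro w z u
    rw [norm_mul]
    calc ‖w u‖ * ‖auxI z u‖ ≤ ‖w u‖ * 1 :=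
          mul_le_mul_of_nonneg_left (by rw [Real.norm_eq_abs]; exact hIbd z u) (norm_nonneg _)
      _ = ‖w u‖ := mul_one _
  have hmem_a : ∀ z : Fin d → ℝ, MemLp (fun u => m u * auxI z u) 2 ν := fun z =>
    hmem_m.of_le (ha z).aestronglyMeasurable (Filter.Eventually.of_forall fun u => hbd m z u)
  have hmem_b : ∀ z : Fin d → ℝ, MemLp (fun u => σ u * auxI z u) 2 ν := fun z =>
    hmem_σ.of_le (hb z).aestronglyMeasurable (Filter.Eventually.of_forall fun u => hbd σ z u)
  have hMa : ∀ (i : ℤ) (z : Fin d → ℝ), MemLp (fun ω => m (X i ω) * auxI z (X i ω)) 2 P :=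
    fun i z => hXmem i _ (ha z) (hmem_a z)
  have hMb : ∀ (i : ℤ) (z : Fin d → ℝ), MemLp (fun ω => σ (X i ω) * auxI z (X i ω)) 2 P :=
    fun i z => hXmem i _ (hb z) (hmem_b z)
  -- the product σ(X)·I·ε is in L²
  have hMbe : ∀ (i : ℤ) (z : Fin d → ℝ),
      MemLp (fun ω => σ (X i ω) * auxI z (X i ω) * ε i ω) 2 P := by
    intro i z
    have hiX : Integrable (fun ω => (σ (X i ω) * auxI z (X i ω))^2) P := by
      refine hXint' i (fun u => (σ u * auxI z u)^2) ((hb z).pow_const 2) ?_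
      refine hσ2.mono' (((hb z).pow_const 2)).aestronglyMeasurable
        (Filter.Eventually.of_forall fun u => ?_)
      have h1 : ‖(σ u * auxI z u)^2‖ = ‖σ u * auxI z u‖^2 := by
        rw [Real.norm_eq_abs, Real.norm_eq_abs, ← abs_pow]
      rw [h1]
      calc ‖σ u * auxI z u‖^2 ≤ ‖σ u‖^2 := by
            have := hbd σ z u
            have h0 : (0:ℝ) ≤ ‖σ u * auxI z u‖ := norm_nonneg _
            nlinarith
        _ = σ u ^ 2 := by rw [Real.norm_eq_abs, sq_abs]
    have h := hfact (fun ω => (σ (X i ω) * auxI z (X i ω))^2) (fun ω => (ε i ω)^2)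
      (((hσ.comp (hXMX i)).mul ((hIm z).comp (hXMX i))).pow_const 2)
      ((hεMε i).pow_const 2) hiX (hL2 i)
    refine (memLp_two_iff_integrable_sq
      (((hσ.comp (hXm i)).mul ((hIm z).comp (hXm i))).mul (hεm i)).aestronglyMeasurable).mpr ?_
    exact h.1.congr (Filter.Eventually.of_forall fun ω => by simp only [Function.comp, Pi.mul_apply]; ring)
  -- L² bound for the summands
  have hMB : ∀ (i : ℤ) (z : Fin d → ℝ), MemLp (fun ω => Y i ω * auxI z (X i ω)) 2 P := by
    intro i z
    refine ((hMa i z).add (hMbe i z)).ae_eq (Filter.Eventually.of_forall fun ω => ?_)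
    simp only [Pi.add_apply]
    rw [hY]; ring
  -- set-integral rewriting
  have hsetI : ∀ (z : Fin d → ℝ) (w : (Fin d → ℝ) → ℝ),
      ∫ u, w u * auxI z u ∂ν = ∫ u in {u : Fin d → ℝ | ∀ k, u k ≤ z k}, w u ∂ν := by
    intro z w
    rw [← integral_indicator (hS z)]
    refine integral_congr_ae (Filter.Eventually.of_forall fun u => ?_)
    by_cases h : ∀ k, u k ≤ z k <;>
      simp [Set.indicator_apply, h, auxI, Set.mem_setOf_eq]
  -- mean of each summand
  have hEB : ∀ (i : ℤ) (z : Fin d → ℝ), ∫ ω, Y i ω * auxI z (X i ω) ∂P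
      = ∫ u in {u : Fin d → ℝ | ∀ k, u k ≤ z k}, m u ∂ν := by
    intro i z
    have hpt : ∀ ω, Y i ω * auxI z (X i ω)
        = m (X i ω) * auxI z (X i ω) + σ (X i ω) * auxI z (X i ω) * ε i ω := by
      intro ω; rw [hY]; ring
    rw [integral_congr_ae (Filter.Eventually.of_forall hpt),
      integral_add ((hMa i z).integrable one_le_two) ((hMbe i z).integrable one_le_two)]
    have h2 := (hfact (fun ω => σ (X i ω) * auxI z (X i ω)) (ε i)
      ((hσ.comp (hXMX i)).mul ((hIm z).comp (hXMX i))) (hεMε i)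
      ((hMb i z).integrable one_le_two) (hεInt i)).2
    rw [h2, hεmean i, mul_zero, add_zero, hXint i _ (ha z), hsetI z m]
  -- integrability of w² times indicator
  have hsqint : ∀ (w : (Fin d → ℝ) → ℝ) (zz : Fin d → ℝ), Measurable w →
      Integrable (fun u => w u ^ 2) ν → Integrable (fun u => w u ^ 2 * auxI zz u) ν := by
    intro w zz hw hwi
    refine hwi.mono' ((hw.pow_const 2).mul (hIm zz)).aestronglyMeasurable
      (Filter.Eventually.of_forall fun u => ?_)
    calc ‖w u ^ 2 * auxI zz u‖ ≤ ‖w u ^ 2‖ := hbd (fun u => w u ^ 2) zz u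
      _ = w u ^ 2 := by rw [Real.norm_eq_abs, abs_of_nonneg (sq_nonneg _)]
  -- diagonal second moments
  have hEdiag : ∀ i : ℤ, ∫ ω, (Y i ω * auxI z₁ (X i ω)) * (Y i ω * auxI z₂ (X i ω)) ∂P
      = (∫ u in {u : Fin d → ℝ | ∀ k, u k ≤ min (z₁ k) (z₂ k)}, (m u) ^ 2 ∂ν)
        + ∫ u in {u : Fin d → ℝ | ∀ k, u k ≤ min (z₁ k) (z₂ k)}, (σ u) ^ 2 ∂ν := by
    intro i
    have hpt : ∀ ω, (Y i ω * auxI z₁ (X i ω)) * (Y i ω * auxI z₂ (X i ω))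
        = (m (X i ω)) ^ 2 * auxI (fun k => min (z₁ k) (z₂ k)) (X i ω)
          + (2 * (m (X i ω) * (σ (X i ω) * auxI (fun k => min (z₁ k) (z₂ k)) (X i ω)))) * ε i ω
          + ((σ (X i ω)) ^ 2 * auxI (fun k => min (z₁ k) (z₂ k)) (X i ω)) * (ε i ω) ^ 2 := by
      intro ω
      have h := hImin (X i ω)
      rw [hY]
      linear_combination (m (X i ω) + σ (X i ω) * ε i ω) ^ 2 * h
    have i1 : Integrable (fun ω => (m (X i ω)) ^ 2 * auxI (fun k => min (z₁ k) (z₂ k)) (X i ω)) P :=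
      hXint' i _ ((hm.pow_const 2).mul (hIm _)) (hsqint m _ hm hm2)
    have mφ2 : Measurable[auxJoint X]
        (fun ω => 2 * (m (X i ω) * (σ (X i ω) * auxI (fun k => min (z₁ k) (z₂ k)) (X i ω)))) :=
      ((hm.comp (hXMX i)).mul ((hσ.comp (hXMX i)).mul
        ((hIm _).comp (hXMX i)))).const_mul 2
    have iφ2 : Integrable
        (fun ω => 2 * (m (X i ω) * (σ (X i ω) * auxI (fun k => min (z₁ k) (z₂ k)) (X i ω)))) P := by
      have := (aux_mul_int (hXmem i m hm hmem_m) (hMb i (fun k => min (z₁ k) (z₂ k)))).const_mul 2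
      exact this.congr (Filter.Eventually.of_forall fun ω => by ring)
    have hf2 := hfact _ (ε i) mφ2 (hεMε i) iφ2 (hεInt i)
    have i2 : Integrable (fun ω =>
        (2 * (m (X i ω) * (σ (X i ω) * auxI (fun k => min (z₁ k) (z₂ k)) (X i ω)))) * ε i ω) P :=
      hf2.1
    have h2 : ∫ ω, (2 * (m (X i ω) * (σ (X i ω) * auxI (fun k => min (z₁ k) (z₂ k)) (X i ω)))) * ε i ω ∂P
        = (∫ ω, 2 * (m (X i ω) * (σ (X i ω) * auxI (fun k => min (z₁ k) (z₂ k)) (X i ω))) ∂P)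
          * ∫ ω, ε i ω ∂P := hf2.2
    have mφ3 : Measurable[auxJoint X]
        (fun ω => (σ (X i ω)) ^ 2 * auxI (fun k => min (z₁ k) (z₂ k)) (X i ω)) :=
      ((hσ.comp (hXMX i)).pow_const 2).mul ((hIm _).comp (hXMX i))
    have iφ3 : Integrable (fun ω => (σ (X i ω)) ^ 2 * auxI (fun k => min (z₁ k) (z₂ k)) (X i ω)) P :=
      hXint' i _ ((hσ.pow_const 2).mul (hIm _)) (hsqint σ _ hσ hσ2)
    have hf3 := hfact _ (fun ω => (ε i ω) ^ 2) mφ3 ((hεMε i).pow_const 2) iφ3 (hL2 i)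
    have i3 : Integrable (fun ω =>
        ((σ (X i ω)) ^ 2 * auxI (fun k => min (z₁ k) (z₂ k)) (X i ω)) * (ε i ω) ^ 2) P := hf3.1
    have h3 : ∫ ω, ((σ (X i ω)) ^ 2 * auxI (fun k => min (z₁ k) (z₂ k)) (X i ω)) * (ε i ω) ^ 2 ∂P
        = (∫ ω, (σ (X i ω)) ^ 2 * auxI (fun k => min (z₁ k) (z₂ k)) (X i ω) ∂P)
          * ∫ ω, (ε i ω) ^ 2 ∂P := hf3.2
    have i12 : Integrable (fun ω => (m (X i ω)) ^ 2 * auxI (fun k => min (z₁ k) (z₂ k)) (X i ω)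
        + (2 * (m (X i ω) * (σ (X i ω) * auxI (fun k => min (z₁ k) (z₂ k)) (X i ω)))) * ε i ω) P :=
      i1.add i2
    rw [integral_congr_ae (Filter.Eventually.of_forall hpt), integral_add i12 i3,
      integral_add i1 i2, h2, h3, hεmean i, hεsq i, mul_zero, mul_one, add_zero,
      hXint i (fun u => m u ^ 2 * auxI (fun k => min (z₁ k) (z₂ k)) u) ((hm.pow_const 2).mul (hIm _)),
      hXint i (fun u => σ u ^ 2 * auxI (fun k => min (z₁ k) (z₂ k)) u) ((hσ.pow_const 2).mul (hIm _)),
      hsetI _ (fun u => m u ^ 2), hsetI _ (fun u => σ u ^ 2)]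
  -- off-diagonal second moments
  have hEoff : ∀ i j : ℤ, i ≠ j →
      ∫ ω, (Y i ω * auxI z₁ (X i ω)) * (Y j ω * auxI z₂ (X j ω)) ∂P
      = (∫ u in {u : Fin d → ℝ | ∀ k, u k ≤ z₁ k}, m u ∂ν)
        * ∫ u in {u : Fin d → ℝ | ∀ k, u k ≤ z₂ k}, m u ∂ν := by
    intro i j hij
    have hpt : ∀ ω, (Y i ω * auxI z₁ (X i ω)) * (Y j ω * auxI z₂ (X j ω))
        = (m (X i ω) * auxI z₁ (X i ω)) * (m (X j ω) * auxI z₂ (X j ω))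
          + ((m (X i ω) * auxI z₁ (X i ω)) * (σ (X j ω) * auxI z₂ (X j ω))) * ε j ω
          + ((σ (X i ω) * auxI z₁ (X i ω)) * (m (X j ω) * auxI z₂ (X j ω))) * ε i ω
          + ((σ (X i ω) * auxI z₁ (X i ω)) * (σ (X j ω) * auxI z₂ (X j ω)))
              * (ε i ω * ε j ω) := by
      intro ω; rw [hY, hY]; ring
    -- term 1
    have hind1 : ProbabilityTheory.IndepFun (fun ω => m (X i ω) * auxI z₁ (X i ω))
        (fun ω => m (X j ω) * auxI z₂ (X j ω)) P :=
      (hXindep.indepFun hij).comp (ha z₁) (ha z₂)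
    have i1a : Integrable (fun ω => m (X i ω) * auxI z₁ (X i ω)) P :=
      (hMa i z₁).integrable one_le_two
    have i1b : Integrable (fun ω => m (X j ω) * auxI z₂ (X j ω)) P :=
      (hMa j z₂).integrable one_le_two
    have h1 : ∫ ω, (m (X i ω) * auxI z₁ (X i ω)) * (m (X j ω) * auxI z₂ (X j ω)) ∂P
        = (∫ ω, m (X i ω) * auxI z₁ (X i ω) ∂P) * ∫ ω, m (X j ω) * auxI z₂ (X j ω) ∂P :=
      hind1.integral_mul_eq_mul_integral i1a.aestronglyMeasurable i1b.aestronglyMeasurable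
    have i1 : Integrable
        (fun ω => (m (X i ω) * auxI z₁ (X i ω)) * (m (X j ω) * auxI z₂ (X j ω))) P :=
      hind1.integrable_mul i1a i1b
    -- term 2
    have mφ2 : Measurable[auxJoint X]
        (fun ω => (m (X i ω) * auxI z₁ (X i ω)) * (σ (X j ω) * auxI z₂ (X j ω))) :=
      ((hm.comp (hXMX i)).mul ((hIm z₁).comp (hXMX i))).mul
        ((hσ.comp (hXMX j)).mul ((hIm z₂).comp (hXMX j)))
    have iφ2 : Integrable
        (fun ω => (m (X i ω) * auxI z₁ (X i ω)) * (σ (X j ω) * auxI z₂ (X j ω))) P :=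
      aux_mul_int (hMa i z₁) (hMb j z₂)
    have hf2 := hfact _ (ε j) mφ2 (hεMε j) iφ2 (hεInt j)
    have i2 : Integrable (fun ω =>
        ((m (X i ω) * auxI z₁ (X i ω)) * (σ (X j ω) * auxI z₂ (X j ω))) * ε j ω) P := hf2.1
    have h2 : ∫ ω, ((m (X i ω) * auxI z₁ (X i ω)) * (σ (X j ω) * auxI z₂ (X j ω))) * ε j ω ∂P
        = (∫ ω, (m (X i ω) * auxI z₁ (X i ω)) * (σ (X j ω) * auxI z₂ (X j ω)) ∂P)
          * ∫ ω, ε j ω ∂P := hf2.2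
    -- term 3
    have mφ3 : Measurable[auxJoint X]
        (fun ω => (σ (X i ω) * auxI z₁ (X i ω)) * (m (X j ω) * auxI z₂ (X j ω))) :=
      ((hσ.comp (hXMX i)).mul ((hIm z₁).comp (hXMX i))).mul
        ((hm.comp (hXMX j)).mul ((hIm z₂).comp (hXMX j)))
    have iφ3 : Integrable
        (fun ω => (σ (X i ω) * auxI z₁ (X i ω)) * (m (X j ω) * auxI z₂ (X j ω))) P :=
      aux_mul_int (hMb i z₁) (hMa j z₂)
    have hf3 := hfact _ (ε i) mφ3 (hεMε i) iφ3 (hεInt i)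
    have i3 : Integrable (fun ω =>
        ((σ (X i ω) * auxI z₁ (X i ω)) * (m (X j ω) * auxI z₂ (X j ω))) * ε i ω) P := hf3.1
    have h3 : ∫ ω, ((σ (X i ω) * auxI z₁ (X i ω)) * (m (X j ω) * auxI z₂ (X j ω))) * ε i ω ∂P
        = (∫ ω, (σ (X i ω) * auxI z₁ (X i ω)) * (m (X j ω) * auxI z₂ (X j ω)) ∂P)
          * ∫ ω, ε i ω ∂P := hf3.2
    -- term 4
    have mφ4 : Measurable[auxJoint X]
        (fun ω => (σ (X i ω) * auxI z₁ (X i ω)) * (σ (X j ω) * auxI z₂ (X j ω))) :=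
      ((hσ.comp (hXMX i)).mul ((hIm z₁).comp (hXMX i))).mul
        ((hσ.comp (hXMX j)).mul ((hIm z₂).comp (hXMX j)))
    have iφ4 : Integrable
        (fun ω => (σ (X i ω) * auxI z₁ (X i ω)) * (σ (X j ω) * auxI z₂ (X j ω))) P :=
      aux_mul_int (hMb i z₁) (hMb j z₂)
    have iψ4 : Integrable (fun ω => ε i ω * ε j ω) P := aux_mul_int (hε2 i) (hε2 j)
    have hf4 := hfact _ (fun ω => ε i ω * ε j ω) mφ4 ((hεMε i).mul (hεMε j)) iφ4 iψ4
    have i4 : Integrable (fun ω =>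
        ((σ (X i ω) * auxI z₁ (X i ω)) * (σ (X j ω) * auxI z₂ (X j ω)))
          * (ε i ω * ε j ω)) P := hf4.1
    have h4 : ∫ ω, ((σ (X i ω) * auxI z₁ (X i ω)) * (σ (X j ω) * auxI z₂ (X j ω)))
          * (ε i ω * ε j ω) ∂P
        = (∫ ω, (σ (X i ω) * auxI z₁ (X i ω)) * (σ (X j ω) * auxI z₂ (X j ω)) ∂P)
          * ∫ ω, ε i ω * ε j ω ∂P := hf4.2
    have i12 : Integrable (fun ω =>
        (m (X i ω) * auxI z₁ (X i ω)) * (m (X j ω) * auxI z₂ (X j ω))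
        + ((m (X i ω) * auxI z₁ (X i ω)) * (σ (X j ω) * auxI z₂ (X j ω))) * ε j ω) P :=
      i1.add i2
    have i123 : Integrable (fun ω =>
        (m (X i ω) * auxI z₁ (X i ω)) * (m (X j ω) * auxI z₂ (X j ω))
        + ((m (X i ω) * auxI z₁ (X i ω)) * (σ (X j ω) * auxI z₂ (X j ω))) * ε j ω
        + ((σ (X i ω) * auxI z₁ (X i ω)) * (m (X j ω) * auxI z₂ (X j ω))) * ε i ω) P :=
      i12.add i3
    rw [integral_congr_ae (Filter.Eventually.of_forall hpt), integral_add i123 i4,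
      integral_add i12 i3, integral_add i1 i2, h1, h2, h3, h4, hεmean i, hεmean j,
      hεcross i j hij, mul_zero, mul_zero, mul_zero, add_zero, add_zero, add_zero,
      hXint i _ (ha z₁), hXint j _ (ha z₂), hsetI _ m, hsetI _ m]
  -- centered covariance
  have hXiXj : ∀ i j : ℤ,
      ∫ ω, (Y i ω * auxI z₁ (X i ω) - ∫ ω', Y i ω' * auxI z₁ (X i ω') ∂P)
          * (Y j ω * auxI z₂ (X j ω) - ∫ ω', Y j ω' * auxI z₂ (X j ω') ∂P) ∂P
        = ∫ ω, (Y i ω * auxI z₁ (X i ω)) * (Y j ω * auxI z₂ (X j ω)) ∂P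
          - (∫ u in {u : Fin d → ℝ | ∀ k, u k ≤ z₁ k}, m u ∂ν)
            * ∫ u in {u : Fin d → ℝ | ∀ k, u k ≤ z₂ k}, m u ∂ν := by
    intro i j
    have hpt : ∀ ω, (Y i ω * auxI z₁ (X i ω) - ∫ ω', Y i ω' * auxI z₁ (X i ω') ∂P)
          * (Y j ω * auxI z₂ (X j ω) - ∫ ω', Y j ω' * auxI z₂ (X j ω') ∂P)
        = (Y i ω * auxI z₁ (X i ω)) * (Y j ω * auxI z₂ (X j ω))
          - ((∫ ω', Y j ω' * auxI z₂ (X j ω') ∂P) * (Y i ω * auxI z₁ (X i ω))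
            + ((∫ ω', Y i ω' * auxI z₁ (X i ω') ∂P) * (Y j ω * auxI z₂ (X j ω))
              - (∫ ω', Y i ω' * auxI z₁ (X i ω') ∂P)
                * ∫ ω', Y j ω' * auxI z₂ (X j ω') ∂P)) := by
      intro ω; ring
    have iBB : Integrable
        (fun ω => (Y i ω * auxI z₁ (X i ω)) * (Y j ω * auxI z₂ (X j ω))) P :=
      aux_mul_int (hMB i z₁) (hMB j z₂)
    have iB1 : Integrable (fun ω => Y i ω * auxI z₁ (X i ω)) P :=
      (hMB i z₁).integrable one_le_two
    have iB2 : Integrable (fun ω => Y j ω * auxI z₂ (X j ω)) P :=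
      (hMB j z₂).integrable one_le_two
    have isub : Integrable (fun ω =>
        (∫ ω', Y j ω' * auxI z₂ (X j ω') ∂P) * (Y i ω * auxI z₁ (X i ω))
          + ((∫ ω', Y i ω' * auxI z₁ (X i ω') ∂P) * (Y j ω * auxI z₂ (X j ω))
            - (∫ ω', Y i ω' * auxI z₁ (X i ω') ∂P)
              * ∫ ω', Y j ω' * auxI z₂ (X j ω') ∂P)) P :=
      (iB1.const_mul _).add ((iB2.const_mul _).sub (integrable_const _))
    have isub1 : Integrable (fun ω =>
        (∫ ω', Y j ω' * auxI z₂ (X j ω') ∂P) * (Y i ω * auxI z₁ (X i ω))) P :=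
      iB1.const_mul _
    have isub2 : Integrable (fun ω =>
        (∫ ω', Y i ω' * auxI z₁ (X i ω') ∂P) * (Y j ω * auxI z₂ (X j ω))
          - (∫ ω', Y i ω' * auxI z₁ (X i ω') ∂P)
            * ∫ ω', Y j ω' * auxI z₂ (X j ω') ∂P) P :=
      (iB2.const_mul _).sub (integrable_const _)
    have isub2a : Integrable (fun ω =>
        (∫ ω', Y i ω' * auxI z₁ (X i ω') ∂P) * (Y j ω * auxI z₂ (X j ω))) P :=
      iB2.const_mul _
    rw [integral_congr_ae (Filter.Eventually.of_forall hpt), integral_sub iBB isub,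
      integral_add isub1 isub2, integral_sub isub2a (integrable_const _), integral_const_mul,
      integral_const_mul, integral_const]
    simp only [probReal_univ, one_smul]
    rw [hEB i z₁, hEB j z₂]
    ring
  -- each cross term
  have hterm : ∀ i' j' : ℕ, i' ∈ Finset.Icc 1 n → j' ∈ Finset.Icc 1 n →
      ∫ ω, (Y ↑i' ω * auxI z₁ (X ↑i' ω) - ∫ ω', Y ↑i' ω' * auxI z₁ (X ↑i' ω') ∂P)
          * (Y ↑j' ω * auxI z₂ (X ↑j' ω) - ∫ ω', Y ↑j' ω' * auxI z₂ (X ↑j' ω') ∂P) ∂P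
      = if i' = j' then
          (∫ u in {u : Fin d → ℝ | ∀ k, u k ≤ min (z₁ k) (z₂ k)}, (m u) ^ 2 ∂ν)
            + (∫ u in {u : Fin d → ℝ | ∀ k, u k ≤ min (z₁ k) (z₂ k)}, (σ u) ^ 2 ∂ν)
            - (∫ u in {u : Fin d → ℝ | ∀ k, u k ≤ z₁ k}, m u ∂ν)
              * (∫ u in {u : Fin d → ℝ | ∀ k, u k ≤ z₂ k}, m u ∂ν)
        else 0 := by
    intro i' j' _ _
    by_cases hij : i' = j'
    · subst hij
      rw [if_pos rfl, hXiXj, hEdiag]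
    · rw [if_neg hij, hXiXj, hEoff _ _ (by exact_mod_cast hij), sub_self]
  -- square integrability of the centered summands
  have hMξ : ∀ (i : ℤ) (z : Fin d → ℝ),
      MemLp (fun ω => Y i ω * auxI z (X i ω) - ∫ ω', Y i ω' * auxI z (X i ω') ∂P) 2 P :=
    fun i z => (hMB i z).sub (memLp_const _)
  have hintξ : ∀ i j : ℤ,
      Integrable (fun ω =>
        (Y i ω * auxI z₁ (X i ω) - ∫ ω', Y i ω' * auxI z₁ (X i ω') ∂P)
          * (Y j ω * auxI z₂ (X j ω) - ∫ ω', Y j ω' * auxI z₂ (X j ω') ∂P)) P :=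
    fun i j => aux_mul_int (hMξ i z₁) (hMξ j z₂)
  -- rewrite the statement
  simp only [hA, auxI_apply]
  have e1 : ∀ ω : Ω, ((n:ℝ) ^ (-(1/2:ℝ)) * ∑ i' ∈ Finset.Icc 1 n,
        (Y ↑i' ω * auxI z₁ (X ↑i' ω) - ∫ ω', Y ↑i' ω' * auxI z₁ (X ↑i' ω') ∂P))
      * ((n:ℝ) ^ (-(1/2:ℝ)) * ∑ j' ∈ Finset.Icc 1 n,
        (Y ↑j' ω * auxI z₂ (X ↑j' ω) - ∫ ω', Y ↑j' ω' * auxI z₂ (X ↑j' ω') ∂P))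
      = ((n:ℝ) ^ (-(1/2:ℝ)) * (n:ℝ) ^ (-(1/2:ℝ)))
        * ∑ i' ∈ Finset.Icc 1 n, ∑ j' ∈ Finset.Icc 1 n,
          (Y ↑i' ω * auxI z₁ (X ↑i' ω) - ∫ ω', Y ↑i' ω' * auxI z₁ (X ↑i' ω') ∂P)
            * (Y ↑j' ω * auxI z₂ (X ↑j' ω) - ∫ ω', Y ↑j' ω' * auxI z₂ (X ↑j' ω') ∂P) := by
    intro ω
    rw [mul_mul_mul_comm, Finset.sum_mul_sum]
  rw [integral_congr_ae (Filter.Eventually.of_forall e1), integral_const_mul,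
    integral_finset_sum (Finset.Icc 1 n)
      (fun (i' : ℕ) _ => integrable_finset_sum (Finset.Icc 1 n)
        (fun (j' : ℕ) _ => hintξ (↑i') (↑j')))]
  have e2 : ∑ i' ∈ Finset.Icc 1 n, ∫ ω, ∑ j' ∈ Finset.Icc 1 n,
        (Y ↑i' ω * auxI z₁ (X ↑i' ω) - ∫ ω', Y ↑i' ω' * auxI z₁ (X ↑i' ω') ∂P)
          * (Y ↑j' ω * auxI z₂ (X ↑j' ω) - ∫ ω', Y ↑j' ω' * auxI z₂ (X ↑j' ω') ∂P) ∂P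
      = ∑ _i' ∈ Finset.Icc 1 n, ((∫ u in {u : Fin d → ℝ | ∀ k, u k ≤ min (z₁ k) (z₂ k)}, (m u) ^ 2 ∂ν)
            + (∫ u in {u : Fin d → ℝ | ∀ k, u k ≤ min (z₁ k) (z₂ k)}, (σ u) ^ 2 ∂ν)
            - (∫ u in {u : Fin d → ℝ | ∀ k, u k ≤ z₁ k}, m u ∂ν)
              * (∫ u in {u : Fin d → ℝ | ∀ k, u k ≤ z₂ k}, m u ∂ν)) := by
    refine Finset.sum_congr rfl fun i' hi' => ?_
    rw [integral_finset_sum (Finset.Icc 1 n) (fun (j' : ℕ) _ => hintξ (↑i') (↑j')),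
      Finset.sum_congr rfl (fun j' hj' => hterm i' j' hi' hj'),
      Finset.sum_ite_eq (Finset.Icc 1 n) i' (fun _ => (∫ u in {u : Fin d → ℝ | ∀ k, u k ≤ min (z₁ k) (z₂ k)}, (m u) ^ 2 ∂ν)
            + (∫ u in {u : Fin d → ℝ | ∀ k, u k ≤ min (z₁ k) (z₂ k)}, (σ u) ^ 2 ∂ν)
            - (∫ u in {u : Fin d → ℝ | ∀ k, u k ≤ z₁ k}, m u ∂ν)
              * (∫ u in {u : Fin d → ℝ | ∀ k, u k ≤ z₂ k}, m u ∂ν)), if_pos hi']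
  rw [e2, Finset.sum_const, Nat.card_Icc, Nat.add_sub_cancel, nsmul_eq_mul]
  have hnpos : (0:ℝ) < (n:ℝ) := by exact_mod_cast Nat.pos_of_ne_zero (by omega)
  have hrr : (n:ℝ) ^ (-(1/2:ℝ)) * (n:ℝ) ^ (-(1/2:ℝ)) = ((n:ℝ))⁻¹ := by
    rw [← Real.rpow_add hnpos]
    norm_num
    rw [Real.rpow_neg_one]
  rw [hrr, inv_mul_cancel_left₀ (ne_of_gt hnpos)]
end
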